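/- Let T ≥ 1 and pe : ℕ → ℕ → ℝ. Define the value function V by backward recursion: for a current model index i and time t ∈ {1,…,T}, V(T+1, i) = 0, and V(t, i) = min( α + pe(t, t) + V(t+1, t), pe(i, t) + V(t+1, i) ). Then V(1, 0) = min over all schedules S ⊆ {1,…,T} of C_α(S) = α·|S| + Σ_{t=1}^T pe(r_S(t), t). -/

import Mathlib

/-- The most recent retrain time at or before `t` (0 if none). -/
def rS (S : Finset ℕ) (t : ℕ) : ℕ := (S.filter (· ≤ t)).sup id

/-- Total cost of a retraining schedule `S`. -/
noncomputable def cost (α : ℝ) (pe : ℕ → ℕ → ℝ) (T : ℕ) (S : Finset ℕ) : ℝ :=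
  α * S.card + ∑ t ∈ Finset.Icc 1 T, pe (rS S t) t

/-- Fuel-indexed value function: `Vaux α pe k t i` is the optimal cost-to-go from time `t`
with current model `i` when `k` timesteps remain (so `V t i = Vaux (T + 1 - t) t i`);
`Vaux 0 t i = 0` encodes the boundary condition `V (T+1) i = 0`, and one step of fuel
encodes the Bellman recursion
`V t i = min (α + pe t t + V (t+1) t) (pe i t + V (t+1) i)`. -/
noncomputable def Vaux (α : ℝ) (pe : ℕ → ℕ → ℝ) : ℕ → ℕ → ℕ → ℝ
  | 0, _, _ => 0
  | k + 1, t, i =>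
      min (α + pe t t + Vaux α pe k (t + 1) t) (pe i t + Vaux α pe k (t + 1) i)

/-- most recent retrain time at or before `t`, with default `i`. -/
def rI (i : ℕ) (S : Finset ℕ) (t : ℕ) : ℕ :=
  if S.filter (· ≤ t) = ∅ then i else (S.filter (· ≤ t)).sup id

lemma rI_zero (S : Finset ℕ) (t : ℕ) : rI 0 S t = rS S t := by
  unfold rI rS
  split
  · rename_i h; simp [h]
  · rfl

lemma filter_le_empty {S : Finset ℕ} {u b : ℕ} (hS : S ⊆ Finset.Icc (u + 1) b) :
    S.filter (· ≤ u) = ∅ := by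
  rw [Finset.filter_eq_empty_iff]
  intro x hx
  have := hS hx
  simp only [Finset.mem_Icc] at this
  simp; omega

lemma rI_default {S : Finset ℕ} {u b i : ℕ} (hS : S ⊆ Finset.Icc (u + 1) b) :
    rI i S u = i := by
  unfold rI; rw [if_pos (filter_le_empty hS)]

lemma rI_insert_self {S : Finset ℕ} {t b i : ℕ} (hS : S ⊆ Finset.Icc (t + 2) b) :
    rI i (insert (t + 1) S) (t + 1) = t + 1 := by
  have h : (insert (t + 1) S).filter (· ≤ t + 1) = {t + 1} := by
    rw [Finset.filter_insert, if_pos (by simp), filter_le_empty hS]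
    rfl
  unfold rI
  rw [h]; simp

lemma rI_insert_later {S : Finset ℕ} {t b u i : ℕ} (hS : S ⊆ Finset.Icc (t + 2) b)
    (hu : t + 2 ≤ u) :
    rI i (insert (t + 1) S) u = rI (t + 1) S u := by
  have h : (insert (t + 1) S).filter (· ≤ u) = insert (t + 1) (S.filter (· ≤ u)) := by
    rw [Finset.filter_insert, if_pos (show t + 1 ≤ u by omega)]
  unfold rI
  rw [h, if_neg (by simp)]
  by_cases he : S.filter (· ≤ u) = ∅
  · rw [if_pos he, he]; simp
  · rw [if_neg he, Finset.sup_insert]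
    obtain ⟨x, hx⟩ := Finset.nonempty_iff_ne_empty.mpr he
    have hx2 : t + 2 ≤ x := by
      have := hS (Finset.mem_filter.mp hx).1
      simp only [Finset.mem_Icc] at this; omega
    have : t + 1 ≤ (S.filter (· ≤ u)).sup id := by
      calc t + 1 ≤ x := by omega
        _ ≤ _ := Finset.le_sup (f := id) hx
    exact sup_eq_right.mpr this

lemma erase_subset_Icc {S : Finset ℕ} {t b : ℕ} (hS : S ⊆ Finset.Icc (t + 1) b) :
    S.erase (t + 1) ⊆ Finset.Icc (t + 2) b := by
  intro x hx
  have h1 := Finset.ne_of_mem_erase hx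
  have h2 := hS (Finset.mem_of_mem_erase hx)
  simp only [Finset.mem_Icc] at *
  omega

lemma Icc_split (t k : ℕ) :
    Finset.Icc (t + 1) (t + 1 + k) = insert (t + 1) (Finset.Icc (t + 2) (t + 1 + k)) := by
  ext x
  simp only [Finset.mem_Icc, Finset.mem_insert]
  omega

lemma vaux_le (α : ℝ) (pe : ℕ → ℕ → ℝ) :
    ∀ k t i S, S ⊆ Finset.Icc (t + 1) (t + k) →
      Vaux α pe k (t + 1) i ≤
        α * S.card + ∑ u ∈ Finset.Icc (t + 1) (t + k), pe (rI i S u) u := by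
  intro k
  induction k with
  | zero =>
    intro t i S hS
    have he : Finset.Icc (t + 1) (t + 0) = ∅ := Finset.Icc_eq_empty (by omega)
    rw [he] at hS ⊢
    rw [Finset.subset_empty.mp hS]
    simp [Vaux]
  | succ k ih =>
    intro t i S hS
    have hsplit : Finset.Icc (t + 1) (t + (k + 1)) =
        insert (t + 1) (Finset.Icc (t + 2) (t + 1 + k)) := by
      rw [show t + (k + 1) = t + 1 + k from by omega]; exact Icc_split t k
    by_cases ht : t + 1 ∈ S
    · -- retrain branch
      set S' := S.erase (t + 1) with hS'def
      have hS' : S' ⊆ Finset.Icc (t + 2) (t + 1 + k) := by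
        apply erase_subset_Icc
        rwa [show t + (k + 1) = t + 1 + k from by omega] at hS
      have hins : S = insert (t + 1) S' := by
        rw [hS'def, Finset.insert_erase ht]
      have hcard : (S.card : ℝ) = S'.card + 1 := by
        rw [hins, Finset.card_insert_of_notMem (Finset.notMem_erase _ _)]
        push_cast; ring
      have hsum : ∑ u ∈ Finset.Icc (t + 1) (t + (k + 1)), pe (rI i S u) u
          = pe (t + 1) (t + 1) + ∑ u ∈ Finset.Icc (t + 2) (t + 1 + k), pe (rI (t + 1) S' u) u := by
        rw [hsplit, Finset.sum_insert (by simp)]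
        congr 1
        · rw [hins, rI_insert_self hS']
        · apply Finset.sum_congr rfl
          intro u hu
          simp only [Finset.mem_Icc] at hu
          rw [hins, rI_insert_later hS' hu.1]
      have hmain := ih (t + 1) (t + 1) S' hS'
      show Vaux α pe (k + 1) (t + 1) i ≤ _
      calc Vaux α pe (k + 1) (t + 1) i
          ≤ α + pe (t + 1) (t + 1) + Vaux α pe k (t + 1 + 1) (t + 1) := min_le_left _ _
        _ ≤ α + pe (t + 1) (t + 1) +
            (α * S'.card + ∑ u ∈ Finset.Icc (t + 1 + 1) (t + 1 + k), pe (rI (t + 1) S' u) u) := by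
              linarith
        _ = α * S.card + ∑ u ∈ Finset.Icc (t + 1) (t + (k + 1)), pe (rI i S u) u := by
              rw [hsum, hcard]; ring_nf
    · -- keep branch
      have hSsub : S ⊆ Finset.Icc (t + 2) (t + 1 + k) := by
        intro x hx
        have h2 := hS hx
        simp only [Finset.mem_Icc] at *
        have : x ≠ t + 1 := fun h => ht (h ▸ hx)
        omega
      have hsum : ∑ u ∈ Finset.Icc (t + 1) (t + (k + 1)), pe (rI i S u) u
          = pe i (t + 1) + ∑ u ∈ Finset.Icc (t + 2) (t + 1 + k), pe (rI i S u) u := by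
        rw [hsplit, Finset.sum_insert (by simp)]
        congr 1
        rw [rI_default hSsub]
      have hmain := ih (t + 1) i S hSsub
      calc Vaux α pe (k + 1) (t + 1) i
          ≤ pe i (t + 1) + Vaux α pe k (t + 1 + 1) i := min_le_right _ _
        _ ≤ pe i (t + 1) +
            (α * S.card + ∑ u ∈ Finset.Icc (t + 1 + 1) (t + 1 + k), pe (rI i S u) u) := by
              linarith
        _ = _ := by rw [hsum]; ring_nf

lemma vaux_exists (α : ℝ) (pe : ℕ → ℕ → ℝ) :
    ∀ k t i, ∃ S ⊆ Finset.Icc (t + 1) (t + k),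
      Vaux α pe k (t + 1) i =
        α * S.card + ∑ u ∈ Finset.Icc (t + 1) (t + k), pe (rI i S u) u := by
  intro k
  induction k with
  | zero =>
    intro t i
    exact ⟨∅, by simp, by simp [Vaux, Finset.Icc_eq_empty (show ¬ t + 1 ≤ t + 0 by omega)]⟩
  | succ k ih =>
    intro t i
    have hsplit : Finset.Icc (t + 1) (t + (k + 1)) =
        insert (t + 1) (Finset.Icc (t + 2) (t + 1 + k)) := by
      rw [show t + (k + 1) = t + 1 + k from by omega]; exact Icc_split t k
    rcases min_cases (α + pe (t + 1) (t + 1) + Vaux α pe k (t + 1 + 1) (t + 1))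
      (pe i (t + 1) + Vaux α pe k (t + 1 + 1) i) with ⟨hmin, _⟩ | ⟨hmin, _⟩
    · -- retrain
      obtain ⟨S', hS', hval⟩ := ih (t + 1) (t + 1)
      refine ⟨insert (t + 1) S', ?_, ?_⟩
      · rw [hsplit]
        exact Finset.insert_subset_insert _ hS'
      · have hnm : t + 1 ∉ S' := fun h => by
          have := hS' h; simp only [Finset.mem_Icc] at this; omega
        have hcard : ((insert (t + 1) S').card : ℝ) = S'.card + 1 := by
          rw [Finset.card_insert_of_notMem hnm]; push_cast; ring
        have hsum : ∑ u ∈ Finset.Icc (t + 1) (t + (k + 1)), pe (rI i (insert (t + 1) S') u) u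
            = pe (t + 1) (t + 1) +
              ∑ u ∈ Finset.Icc (t + 2) (t + 1 + k), pe (rI (t + 1) S' u) u := by
          rw [hsplit, Finset.sum_insert (by simp)]
          congr 1
          · rw [rI_insert_self hS']
          · apply Finset.sum_congr rfl
            intro u hu
            simp only [Finset.mem_Icc] at hu
            rw [rI_insert_later hS' hu.1]
        show Vaux α pe (k + 1) (t + 1) i = _
        rw [show Vaux α pe (k + 1) (t + 1) i = _ from hmin, hval, hsum, hcard]
        ring_nf
    · -- keep
      obtain ⟨S, hSsub, hval⟩ := ih (t + 1) i
      refine ⟨S, ?_, ?_⟩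
      · rw [hsplit]
        exact hSsub.trans (Finset.subset_insert _ _)
      · have hsum : ∑ u ∈ Finset.Icc (t + 1) (t + (k + 1)), pe (rI i S u) u
            = pe i (t + 1) + ∑ u ∈ Finset.Icc (t + 2) (t + 1 + k), pe (rI i S u) u := by
          rw [hsplit, Finset.sum_insert (by simp)]
          congr 1
          rw [rI_default hSsub]
        show Vaux α pe (k + 1) (t + 1) i = _
        rw [show Vaux α pe (k + 1) (t + 1) i = _ from hmin, hval, hsum]
        ring_nf

theorem stmt14 (T : ℕ) (hT : 1 ≤ T) (α : ℝ) (pe : ℕ → ℕ → ℝ) :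
    Vaux α pe T 1 0
      = (Finset.Icc 1 T).powerset.inf' ⟨∅, by simp⟩ (fun S => cost α pe T S) := by
  have hc : ∀ S : Finset ℕ, cost α pe T S
      = α * S.card + ∑ u ∈ Finset.Icc (0 + 1) (0 + T), pe (rI 0 S u) u := by
    intro S
    unfold cost
    simp only [zero_add]
    congr 1
    exact Finset.sum_congr rfl fun u _ => by rw [rI_zero]
  apply le_antisymm
  · apply Finset.le_inf'
    intro S hS
    rw [hc S]
    exact vaux_le α pe T 0 0 S (by simpa using Finset.mem_powerset.mp hS)
  · obtain ⟨S, hSsub, hval⟩ := vaux_exists α pe T 0 0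
    calc _ ≤ cost α pe T S :=
          Finset.inf'_le _ (Finset.mem_powerset.mpr (by simpa using hSsub))
      _ = _ := by rw [hc S, ← hval]
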